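/- Among all probabilities p ∈ [0,1], the Shannon entropy of the Binomial(k,p) distribution is maximized at p = 1/2: for all p ∈ [0,1], H(Bin(k,p)) ≤ H(Bin(k,1/2)). -/

import Mathlib

open Real Finset

noncomputable def Mn (a b : ℕ) (p : ℝ) : ℝ := p ^ a * (1 - p) ^ b
noncomputable def DM (a b : ℕ) (p : ℝ) : ℝ := (a : ℝ) * Mn (a-1) b p - (b : ℝ) * Mn a (b-1) p
noncomputable def DDM (a b : ℕ) (p : ℝ) : ℝ := (a : ℝ) * DM (a-1) b p - (b : ℝ) * DM a (b-1) p

lemma natid1 (n y : ℕ) : (y+1) * (n+1).choose (y+1) = (n+1) * n.choose y := by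
  have := Nat.add_one_mul_choose_eq n y
  rw [this, mul_comm]

lemma natid2 (y z : ℕ) : (z+1) * (y+z+1).choose y = (y+z+1) * (y+z).choose y := by
  have h1 := Nat.choose_succ_right_eq (y+z+1) y
  have h2 := natid1 (y+z) y
  have h3 : y + z + 1 - y = z + 1 := by omega
  rw [h3] at h1
  calc (z+1) * (y+z+1).choose y = (y+z+1).choose y * (z+1) := by ring
  _ = (y+1) * (y+z+1).choose (y+1) := by rw [← h1]; ring
  _ = (y+z+1) * (y+z).choose y := h2

noncomputable def cc (k x : ℕ) : ℝ := (k.choose x : ℝ) * Real.log (k.choose x)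

-- log(u+1) - log u ≤ 1/u for real u ≥ 1 (we use u = y+1 etc.)
lemma log_succ_le (u : ℝ) (hu : 0 < u) : Real.log (u+1) - Real.log u ≤ 1/u := by
  have h := Real.log_le_sub_one_of_pos (show 0 < (u+1)/u by positivity)
  rw [Real.log_div (by linarith) (ne_of_gt hu)] at h
  have : (u+1)/u - 1 = 1/u := by field_simp; ring
  linarith [h, this.ge]

lemma core (y z : ℕ) :
    -((((y+z+2)*(y+z+1)*((y+z).choose y) : ℕ) : ℝ) * (1/((y:ℝ)+1) + 1/((z:ℝ)+1))) ≤
    cc (y+z+2) (y+2) * (((y:ℝ)+2) * ((y:ℝ)+1)) - 2 * (cc (y+z+2) (y+1) * (((y:ℝ)+1) * ((z:ℝ)+1)))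
      + cc (y+z+2) y * (((z:ℝ)+2) * ((z:ℝ)+1)) := by
  set k := y + z + 2 with hk
  have hn2 : 0 < k.choose (y+2) := Nat.choose_pos (by omega)
  have hn1 : 0 < k.choose (y+1) := Nat.choose_pos (by omega)
  have hn0 : 0 < k.choose y := Nat.choose_pos (by omega)
  -- nat identities
  have e1 : (y+2) * ((y+1) * k.choose (y+2)) = (y+z+2)*((y+z+1)*((y+z).choose y)) := by
    have a1 : (y+2) * (y+z+2).choose (y+2) = (y+z+2) * (y+z+1).choose (y+1) := natid1 (y+z+1) (y+1)
    have a2 : (y+1) * (y+z+1).choose (y+1) = (y+z+1) * (y+z).choose y := natid1 (y+z) y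
    calc (y+2) * ((y+1) * k.choose (y+2)) = (y+1) * ((y+2) * k.choose (y+2)) := by ring
    _ = (y+1) * ((y+z+2) * (y+z+1).choose (y+1)) := by rw [a1]
    _ = (y+z+2) * ((y+1) * (y+z+1).choose (y+1)) := by ring
    _ = (y+z+2) * ((y+z+1) * (y+z).choose y) := by rw [a2]
  have e2 : (y+1) * ((z+1) * k.choose (y+1)) = (y+z+2)*((y+z+1)*((y+z).choose y)) := by
    have a1 : (y+1) * (y+z+2).choose (y+1) = (y+z+2) * (y+z+1).choose y :=
      natid1 (y+z+1) y
    have a2 : (z+1) * (y+z+1).choose y = (y+z+1) * (y+z).choose y := natid2 y z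
    calc (y+1) * ((z+1) * k.choose (y+1)) = (z+1) * ((y+1) * k.choose (y+1)) := by ring
    _ = (z+1) * ((y+z+2) * (y+z+1).choose y) := by rw [a1]
    _ = (y+z+2) * ((z+1) * (y+z+1).choose y) := by ring
    _ = (y+z+2) * ((y+z+1) * (y+z).choose y) := by rw [a2]
  have e3 : (z+2) * ((z+1) * k.choose y) = (y+z+2)*((y+z+1)*((y+z).choose y)) := by
    have a1 : (z+2) * (y+z+2).choose y = (y+z+2) * (y+z+1).choose y := by
      have := natid2 y (z+1)
      have h4 : y + (z+1) + 1 = y + z + 2 := by omega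
      have h5 : y + (z+1) = y + z + 1 := by omega
      rw [h4, h5] at this; exact this
    have a2 : (z+1) * (y+z+1).choose y = (y+z+1) * (y+z).choose y := natid2 y z
    calc (z+2) * ((z+1) * k.choose y) = (z+1) * ((z+2) * k.choose y) := by ring
    _ = (z+1) * ((y+z+2) * (y+z+1).choose y) := by rw [a1]
    _ = (y+z+2) * ((z+1) * (y+z+1).choose y) := by ring
    _ = (y+z+2) * ((y+z+1) * (y+z).choose y) := by rw [a2]
  have e4 : (y+2) * k.choose (y+2) = (z+1) * k.choose (y+1) := by
    have := Nat.choose_succ_right_eq k (y+1)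
    have h4 : k - (y+1) = z+1 := by omega
    rw [h4] at this
    rw [mul_comm, this, mul_comm]
  have e5 : (y+1) * k.choose (y+1) = (z+2) * k.choose y := by
    have := Nat.choose_succ_right_eq k y
    have h4 : k - y = z+2 := by omega
    rw [h4] at this
    rw [mul_comm, this, mul_comm]
  set N : ℝ := (((y+z+2)*(y+z+1)*((y+z).choose y) : ℕ) : ℝ) with hN
  have hNnn : 0 ≤ N := Nat.cast_nonneg _
  -- log relations
  set L2 := Real.log (k.choose (y+2) : ℝ)
  set L1 := Real.log (k.choose (y+1) : ℝ)
  set L0 := Real.log (k.choose y : ℝ)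
  have hy2 : (0:ℝ) < (y:ℝ)+2 := by positivity
  have hy1 : (0:ℝ) < (y:ℝ)+1 := by positivity
  have hz2 : (0:ℝ) < (z:ℝ)+2 := by positivity
  have hz1 : (0:ℝ) < (z:ℝ)+1 := by positivity
  have f4 : Real.log ((y:ℝ)+2) + L2 = Real.log ((z:ℝ)+1) + L1 := by
    have : (((y+2) * k.choose (y+2) : ℕ) : ℝ) = (((z+1) * k.choose (y+1) : ℕ) : ℝ) := by
      exact_mod_cast congrArg (Nat.cast (R := ℝ)) e4
    push_cast at this
    have h1 := Real.log_mul (ne_of_gt hy2) (ne_of_gt (show (0:ℝ) < (k.choose (y+2):ℝ) by exact_mod_cast hn2))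
    have h2 := Real.log_mul (ne_of_gt hz1) (ne_of_gt (show (0:ℝ) < (k.choose (y+1):ℝ) by exact_mod_cast hn1))
    rw [← h1, ← h2, this]
  have f5 : Real.log ((y:ℝ)+1) + L1 = Real.log ((z:ℝ)+2) + L0 := by
    have : (((y+1) * k.choose (y+1) : ℕ) : ℝ) = (((z+2) * k.choose y : ℕ) : ℝ) := by
      exact_mod_cast congrArg (Nat.cast (R := ℝ)) e5
    push_cast at this
    have h1 := Real.log_mul (ne_of_gt hy1) (ne_of_gt (show (0:ℝ) < (k.choose (y+1):ℝ) by exact_mod_cast hn1))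
    have h2 := Real.log_mul (ne_of_gt hz2) (ne_of_gt (show (0:ℝ) < (k.choose y:ℝ) by exact_mod_cast hn0))
    rw [← h1, ← h2, this]
  -- the log combination bound
  have hb1 : Real.log ((y:ℝ)+2) - Real.log ((y:ℝ)+1) ≤ 1/((y:ℝ)+1) := by
    have := log_succ_le ((y:ℝ)+1) hy1
    have h : (y:ℝ)+1+1 = (y:ℝ)+2 := by ring
    rw [h] at this; exact this
  have hb2 : Real.log ((z:ℝ)+2) - Real.log ((z:ℝ)+1) ≤ 1/((z:ℝ)+1) := by
    have := log_succ_le ((z:ℝ)+1) hz1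
    have h : (z:ℝ)+1+1 = (z:ℝ)+2 := by ring
    rw [h] at this; exact this
  have key : -(1/((y:ℝ)+1) + 1/((z:ℝ)+1)) ≤ L2 + L0 - 2*L1 := by
    have d1 : L2 - L1 = Real.log ((z:ℝ)+1) - Real.log ((y:ℝ)+2) := by linarith
    have d2 : L0 - L1 = Real.log ((y:ℝ)+1) - Real.log ((z:ℝ)+2) := by linarith
    linarith
  -- combine with the coefficient identities (cast to ℝ)
  have c1 : cc k (y+2) * (((y:ℝ)+2) * ((y:ℝ)+1)) = N * L2 := by
    have h : ((((y+2) * ((y+1) * k.choose (y+2)) : ℕ)) : ℝ) = N := by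
      rw [hN]; push_cast [e1]; ring
    push_cast at h
    rw [cc]
    linear_combination L2 * h
  have c2 : cc k (y+1) * (((y:ℝ)+1) * ((z:ℝ)+1)) = N * L1 := by
    have h : ((((y+1) * ((z+1) * k.choose (y+1)) : ℕ)) : ℝ) = N := by
      rw [hN]; push_cast [e2]; ring
    push_cast at h
    rw [cc]
    linear_combination L1 * h
  have c3 : cc k y * (((z:ℝ)+2) * ((z:ℝ)+1)) = N * L0 := by
    have h : ((((z+2) * ((z+1) * k.choose y) : ℕ)) : ℝ) = N := by
      rw [hN]; push_cast [e3]; ring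
    push_cast at h
    rw [cc]
    linear_combination L0 * h
  rw [c1, c2, c3]
  have := mul_le_mul_of_nonneg_left key hNnn
  linarith [this]

lemma sum_binom (n : ℕ) (p : ℝ) : ∑ x ∈ range (n+1), (n.choose x : ℝ) * Mn x (n-x) p = 1 := by
  have h := add_pow p (1-p) n
  have hp : p + (1-p) = 1 := by ring
  rw [hp, one_pow] at h
  rw [h]
  exact Finset.sum_congr rfl fun x hx => by rw [Mn]; ring

lemma Mn_nonneg {p : ℝ} (h0 : 0 ≤ p) (h1 : p ≤ 1) (a b : ℕ) : 0 ≤ Mn a b p := by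
  have h : (0:ℝ) ≤ 1 - p := by linarith
  exact mul_nonneg (pow_nonneg h0 a) (pow_nonneg h b)

-- T1 : ∑_{y<m+1} N_y/(y+1) * M y (m-y) ≤ (m+2)/p
lemma T1_le (m : ℕ) {p : ℝ} (h0 : 0 < p) (h1 : p < 1) :
    ∑ y ∈ range (m+1), ((((m+2)*(m+1)*(m.choose y) : ℕ) : ℝ) * (1/((y:ℝ)+1))) * Mn y (m-y) p
      ≤ ((m:ℝ)+2)/p := by
  have hrw : ∀ y ∈ range (m+1),
      ((((m+2)*(m+1)*(m.choose y) : ℕ) : ℝ) * (1/((y:ℝ)+1))) * Mn y (m-y) p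
        = ((m:ℝ)+2) * ((m+1).choose (y+1) : ℝ) * Mn y (m-y) p := by
    intro y hy
    have hn := natid1 m y
    have : (((y+1) * (m+1).choose (y+1) : ℕ) : ℝ) = (((m+1) * m.choose y : ℕ) : ℝ) := by
      exact_mod_cast congrArg (Nat.cast (R := ℝ)) hn
    push_cast at this
    have hy1 : ((y:ℝ)+1) ≠ 0 := by positivity
    have e : (((m+2)*(m+1)*(m.choose y):ℕ):ℝ)
        = ((m:ℝ)+2) * (((y:ℝ)+1) * ((m+1).choose (y+1):ℝ)) := by
      push_cast
      linear_combination (-((m:ℝ)+2)) * this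
    rw [e]
    field_simp
  rw [Finset.sum_congr rfl hrw]
  have key : p * ∑ y ∈ range (m+1), ((m:ℝ)+2) * ((m+1).choose (y+1) : ℝ) * Mn y (m-y) p ≤ (m:ℝ)+2 := by
    rw [Finset.mul_sum]
    have hrw2 : ∀ y ∈ range (m+1),
        p * (((m:ℝ)+2) * ((m+1).choose (y+1) : ℝ) * Mn y (m-y) p)
          = ((m:ℝ)+2) * (((m+1).choose (y+1) : ℝ) * Mn (y+1) ((m+1)-(y+1)) p) := by
      intro y hy
      have : (m+1) - (y+1) = m - y := by omega
      rw [this, Mn, Mn, pow_succ]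
      ring
    rw [Finset.sum_congr rfl hrw2, ← Finset.mul_sum]
    have hsum : ∑ y ∈ range (m+1), (((m+1).choose (y+1) : ℝ) * Mn (y+1) ((m+1)-(y+1)) p) ≤ 1 := by
      have hfull := sum_binom (m+1) p
      rw [Finset.sum_range_succ'] at hfull
      have h0t : (0:ℝ) ≤ ((m+1).choose 0 : ℝ) * Mn 0 (m+1-0) p :=
        mul_nonneg (by positivity) (Mn_nonneg h0.le h1.le _ _)
      linarith [hfull.le, hfull.ge]
    nlinarith [hsum, show (0:ℝ) ≤ (m:ℝ)+2 by positivity]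
  rw [le_div_iff₀ h0, mul_comm]
  exact key

lemma T2_le (m : ℕ) {p : ℝ} (h0 : 0 < p) (h1 : p < 1) :
    ∑ y ∈ range (m+1), ((((m+2)*(m+1)*(m.choose y) : ℕ) : ℝ) * (1/(((m-y:ℕ):ℝ)+1))) * Mn y (m-y) p
      ≤ ((m:ℝ)+2)/(1-p) := by
  have h1p : (0:ℝ) < 1 - p := by linarith
  have hrw : ∀ y ∈ range (m+1),
      ((((m+2)*(m+1)*(m.choose y) : ℕ) : ℝ) * (1/(((m-y:ℕ):ℝ)+1))) * Mn y (m-y) p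
        = ((m:ℝ)+2) * (((m+1).choose y : ℝ) * Mn y (m-y) p) := by
    intro y hy
    simp only [Finset.mem_range] at hy
    have hz : y + (m - y) = m := by omega
    have hn := natid2 y (m-y)
    rw [hz] at hn
    have hcast : (((m-y:ℕ)+1) * (m+1).choose y : ℕ) = ((m+1) * m.choose y : ℕ) := hn
    have this2 : ((((m-y:ℕ):ℝ))+1) * (((m+1).choose y : ℕ) : ℝ) = ((m:ℝ)+1) * ((m.choose y : ℕ) : ℝ) := by
      exact_mod_cast congrArg (Nat.cast (R := ℝ)) hcast
    have hy1 : (((m-y:ℕ):ℝ)+1) ≠ 0 := by positivity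
    have e : (((m+2)*(m+1)*(m.choose y):ℕ):ℝ)
        = ((m:ℝ)+2) * ((((m-y:ℕ):ℝ)+1) * ((m+1).choose y : ℝ)) := by
      push_cast
      push_cast at this2
      linear_combination (((m:ℝ)+2)) * this2.symm
    rw [e]
    field_simp
  rw [Finset.sum_congr rfl hrw]
  have key : (1-p) * ∑ y ∈ range (m+1), ((m:ℝ)+2) * (((m+1).choose y : ℝ) * Mn y (m-y) p) ≤ (m:ℝ)+2 := by
    rw [Finset.mul_sum]
    have hrw2 : ∀ y ∈ range (m+1),
        (1-p) * (((m:ℝ)+2) * (((m+1).choose y : ℝ) * Mn y (m-y) p))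
          = ((m:ℝ)+2) * (((m+1).choose y : ℝ) * Mn y ((m+1)-y) p) := by
      intro y hy
      simp only [Finset.mem_range] at hy
      have : (m+1) - y = (m - y) + 1 := by omega
      rw [this, Mn, Mn, pow_succ]
      ring
    rw [Finset.sum_congr rfl hrw2, ← Finset.mul_sum]
    have hsum : ∑ y ∈ range (m+1), (((m+1).choose y : ℝ) * Mn y ((m+1)-y) p) ≤ 1 := by
      have hfull := sum_binom (m+1) p
      rw [← hfull]
      apply Finset.sum_le_sum_of_subset_of_nonneg
      · exact Finset.range_subset_range.mpr (by omega)
      · intro i _ _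
        exact mul_nonneg (by positivity) (Mn_nonneg h0.le h1.le _ _)
    nlinarith [hsum, show (0:ℝ) ≤ (m:ℝ)+2 by positivity]
  rw [le_div_iff₀ h1p, mul_comm]
  exact key

noncomputable def AA (k x : ℕ) (p : ℝ) : ℝ := cc k x * ((x:ℝ) * (((x-1:ℕ)):ℝ) * Mn (x-1-1) (k-x) p)
noncomputable def BB (k x : ℕ) (p : ℝ) : ℝ := cc k x * ((x:ℝ) * (((k-x:ℕ)):ℝ) * Mn (x-1) (k-x-1) p)
noncomputable def CCf (k x : ℕ) (p : ℝ) : ℝ := cc k x * ((((k-x:ℕ)):ℝ) * (((k-x-1:ℕ)):ℝ) * Mn x (k-x-1-1) p)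

lemma ddm_split (k x : ℕ) (p : ℝ) :
    cc k x * DDM x (k-x) p = AA k x p - 2*BB k x p + CCf k x p := by
  unfold AA BB CCf DDM DM; ring

lemma shiftA (m : ℕ) (p : ℝ) :
    ∑ x ∈ range (m+2+1), AA (m+2) x p = ∑ y ∈ range (m+1), AA (m+2) (y+2) p := by
  rw [Finset.sum_range_succ', Finset.sum_range_succ']
  have h0' : AA (m+2) 0 p = 0 := by simp [AA]
  have h1' : AA (m+2) (0+1) p = 0 := by simp [AA]
  rw [h0', h1']
  simp

lemma shiftB (m : ℕ) (p : ℝ) :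
    ∑ x ∈ range (m+2+1), BB (m+2) x p = ∑ y ∈ range (m+1), BB (m+2) (y+1) p := by
  rw [Finset.sum_range_succ, Finset.sum_range_succ']
  have h0' : BB (m+2) 0 p = 0 := by simp [BB]
  have h1' : BB (m+2) (m+2) p = 0 := by simp [BB]
  rw [h0', h1']
  simp

lemma shiftC (m : ℕ) (p : ℝ) :
    ∑ x ∈ range (m+2+1), CCf (m+2) x p = ∑ y ∈ range (m+1), CCf (m+2) y p := by
  rw [Finset.sum_range_succ, Finset.sum_range_succ]
  have h1' : CCf (m+2) (m+2) p = 0 := by simp [CCf]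
  have h2' : CCf (m+2) (m+1) p = 0 := by
    have e : m+2-(m+1) = 1 := by omega
    simp [CCf, e]
  rw [h1', h2']
  simp

lemma term_bound (y z : ℕ) {p : ℝ} (h0 : 0 ≤ p) (h1' : p ≤ 1) :
    -((((y+z+2)*(y+z+1)*((y+z).choose y) : ℕ) : ℝ) * ((1/((y:ℝ)+1) + 1/((z:ℝ)+1)) * Mn y z p)) ≤
      AA (y+z+2) (y+2) p - 2*BB (y+z+2) (y+1) p + CCf (y+z+2) y p := by
  have hM := Mn_nonneg h0 h1' y z
  have hcore := core y z
  have eA : AA (y+z+2) (y+2) p = cc (y+z+2) (y+2) * ((((y:ℝ)+2) * ((y:ℝ)+1)) * Mn y z p) := by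
    unfold AA
    have e2 : y+2-1-1 = y := by omega
    have e1 : y+2-1 = y+1 := by omega
    have e3 : y+z+2-(y+2) = z := by omega
    rw [e2, e1, e3]
    push_cast; ring
  have eB : BB (y+z+2) (y+1) p = cc (y+z+2) (y+1) * ((((y:ℝ)+1) * ((z:ℝ)+1)) * Mn y z p) := by
    unfold BB
    have e1 : y+1-1 = y := by omega
    have e2 : y+z+2-(y+1) = z+1 := by omega
    have e3 : y+z+2-(y+1)-1 = z := by omega
    rw [e3, e1, e2]
    push_cast; ring
  have eC : CCf (y+z+2) y p = cc (y+z+2) y * ((((z:ℝ)+2) * ((z:ℝ)+1)) * Mn y z p) := by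
    unfold CCf
    have e1 : y+z+2-y = z+2 := by omega
    have e2 : y+z+2-y-1 = z+1 := by omega
    have e3 : y+z+2-y-1-1 = z := by omega
    rw [e3, e2, e1]
    push_cast; ring
  rw [eA, eB, eC]
  have h2 := mul_le_mul_of_nonneg_right hcore hM
  calc -((((y+z+2)*(y+z+1)*((y+z).choose y) : ℕ) : ℝ) * ((1/((y:ℝ)+1) + 1/((z:ℝ)+1)) * Mn y z p))
      = (-((((y+z+2)*(y+z+1)*((y+z).choose y) : ℕ) : ℝ) * (1/((y:ℝ)+1) + 1/((z:ℝ)+1)))) * Mn y z p := by ring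
    _ ≤ (cc (y+z+2) (y+2) * (((y:ℝ)+2) * ((y:ℝ)+1)) - 2 * (cc (y+z+2) (y+1) * (((y:ℝ)+1) * ((z:ℝ)+1)))
          + cc (y+z+2) y * (((z:ℝ)+2) * ((z:ℝ)+1))) * Mn y z p := h2
    _ = cc (y+z+2) (y+2) * ((((y:ℝ)+2) * ((y:ℝ)+1)) * Mn y z p)
          - 2 * (cc (y+z+2) (y+1) * ((((y:ℝ)+1) * ((z:ℝ)+1)) * Mn y z p))
          + cc (y+z+2) y * ((((z:ℝ)+2) * ((z:ℝ)+1)) * Mn y z p) := by ring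

lemma psi2_ge (k : ℕ) {p : ℝ} (h0 : 0 < p) (h1 : p < 1) :
    -((k:ℝ) * p⁻¹ + (k:ℝ) * (1-p)⁻¹) ≤ ∑ x ∈ range (k+1), cc k x * DDM x (k-x) p := by
  obtain _ | _ | m := k
  · simp [cc]
  · have hp : 0 < p⁻¹ := by positivity
    have hq : 0 < (1-p)⁻¹ := by rw [inv_pos]; linarith
    have hs : ∑ x ∈ range (1+1), cc 1 x * DDM x (1-x) p = 0 := by
      rw [Finset.sum_range_succ, Finset.sum_range_succ]
      norm_num [cc]
    rw [hs]
    push_cast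
    nlinarith
  · -- k = m + 2
    have hsplit : ∑ x ∈ range (m+2+1), cc (m+2) x * DDM x (m+2-x) p
        = (∑ x ∈ range (m+2+1), AA (m+2) x p) - 2 * (∑ x ∈ range (m+2+1), BB (m+2) x p)
          + ∑ x ∈ range (m+2+1), CCf (m+2) x p := by
      rw [Finset.sum_congr rfl (fun x _ => ddm_split (m+2) x p)]
      rw [Finset.sum_add_distrib, Finset.sum_sub_distrib, ← Finset.mul_sum]
    rw [hsplit, shiftA, shiftB, shiftC]
    have hterm : ∀ y ∈ range (m+1),
        -((((m+2)*(m+1)*(m.choose y) : ℕ):ℝ) * ((1/((y:ℝ)+1) + 1/(((m-y:ℕ):ℝ)+1)) * Mn y (m-y) p))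
          ≤ AA (m+2) (y+2) p - 2*BB (m+2) (y+1) p + CCf (m+2) y p := by
      intro y hy
      simp only [Finset.mem_range] at hy
      have hz : y + (m - y) = m := by omega
      have h := term_bound y (m-y) h0.le h1.le
      rw [hz] at h
      exact h
    have hsum := Finset.sum_le_sum hterm
    have hL : ∑ y ∈ range (m+1),
        -((((m+2)*(m+1)*(m.choose y) : ℕ):ℝ) * ((1/((y:ℝ)+1) + 1/(((m-y:ℕ):ℝ)+1)) * Mn y (m-y) p))
        = -((∑ y ∈ range (m+1), ((((m+2)*(m+1)*(m.choose y) : ℕ) : ℝ) * (1/((y:ℝ)+1))) * Mn y (m-y) p)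
            + ∑ y ∈ range (m+1), ((((m+2)*(m+1)*(m.choose y) : ℕ) : ℝ) * (1/(((m-y:ℕ):ℝ)+1))) * Mn y (m-y) p) := by
      rw [← Finset.sum_add_distrib, ← Finset.sum_neg_distrib]
      exact Finset.sum_congr rfl fun y _ => by ring
    have hR : ∑ y ∈ range (m+1), (AA (m+2) (y+2) p - 2*BB (m+2) (y+1) p + CCf (m+2) y p)
        = (∑ y ∈ range (m+1), AA (m+2) (y+2) p) - 2 * (∑ y ∈ range (m+1), BB (m+2) (y+1) p)
          + ∑ y ∈ range (m+1), CCf (m+2) y p := by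
      rw [Finset.sum_add_distrib, Finset.sum_sub_distrib, ← Finset.mul_sum]
    rw [hL, hR] at hsum
    have t1 := T1_le m h0 h1
    have t2 := T2_le m h0 h1
    have hcast : (((m+2:ℕ)):ℝ) = (m:ℝ)+2 := by push_cast; ring
    rw [hcast]
    rw [div_eq_mul_inv] at t1 t2
    linarith [t1, t2, hsum]

lemma hasDerivAt_Mn (a b : ℕ) (p : ℝ) : HasDerivAt (fun p => Mn a b p) (DM a b p) p := by
  have h2 : HasDerivAt (fun p : ℝ => (1-p)^b) (((b:ℝ) * (1-p)^(b-1)) * (-1)) p :=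
    (hasDerivAt_pow b (1-p)).comp p ((hasDerivAt_id p).const_sub 1)
  have h := (hasDerivAt_pow a p).mul h2
  refine h.congr_deriv ?_
  simp [DM, Mn]; ring

lemma hasDerivAt_DM (a b : ℕ) (p : ℝ) : HasDerivAt (fun p => DM a b p) (DDM a b p) p :=
  ((hasDerivAt_Mn (a-1) b p).const_mul _).sub ((hasDerivAt_Mn a (b-1) p).const_mul _)

noncomputable def psiF (k : ℕ) (p : ℝ) : ℝ := ∑ x ∈ range (k+1), cc k x * Mn x (k-x) p
noncomputable def psi1 (k : ℕ) (p : ℝ) : ℝ := ∑ x ∈ range (k+1), cc k x * DM x (k-x) p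
noncomputable def psi2F (k : ℕ) (p : ℝ) : ℝ := ∑ x ∈ range (k+1), cc k x * DDM x (k-x) p
noncomputable def GF (k : ℕ) (p : ℝ) : ℝ :=
  k * Real.negMulLog p + k * Real.negMulLog (1-p) - psiF k p
noncomputable def G1 (k : ℕ) (p : ℝ) : ℝ :=
  k * (-Real.log p - 1) + k * (Real.log (1-p) + 1) - psi1 k p
noncomputable def G2F (k : ℕ) (p : ℝ) : ℝ := k * (-(p⁻¹)) + k * (-((1-p)⁻¹)) - psi2F k p

lemma hasDerivAt_psiF (k : ℕ) (p : ℝ) : HasDerivAt (fun q => psiF k q) (psi1 k p) p := by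
  unfold psiF psi1
  exact HasDerivAt.fun_sum fun i _ => (hasDerivAt_Mn i (k-i) p).const_mul _

lemma hasDerivAt_psi1 (k : ℕ) (p : ℝ) : HasDerivAt (fun q => psi1 k q) (psi2F k p) p := by
  unfold psi1 psi2F
  exact HasDerivAt.fun_sum fun i _ => (hasDerivAt_DM i (k-i) p).const_mul _

lemma hasDerivAt_GF (k : ℕ) {p : ℝ} (hp : p ≠ 0) (hq : (1:ℝ) - p ≠ 0) :
    HasDerivAt (fun q => GF k q) (G1 k p) p := by
  have hA : HasDerivAt (fun q : ℝ => (k:ℝ) * Real.negMulLog q) ((k:ℝ) * (-Real.log p - 1)) p :=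
    (Real.hasDerivAt_negMulLog hp).const_mul _
  have hBi : HasDerivAt (fun q : ℝ => Real.negMulLog (1-q)) (Real.log (1-p) + 1) p := by
    have h := (Real.hasDerivAt_negMulLog hq).comp p ((hasDerivAt_id p).const_sub 1)
    refine h.congr_deriv ?_
    ring
  have hB : HasDerivAt (fun q : ℝ => (k:ℝ) * Real.negMulLog (1-q)) ((k:ℝ) * (Real.log (1-p) + 1)) p :=
    hBi.const_mul _
  exact (hA.add hB).sub (hasDerivAt_psiF k p)

lemma hasDerivAt_G1 (k : ℕ) {p : ℝ} (hp : p ≠ 0) (hq : (1:ℝ) - p ≠ 0) :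
    HasDerivAt (fun q => G1 k q) (G2F k p) p := by
  have c1 : HasDerivAt (fun q : ℝ => -Real.log q - 1) (-(p⁻¹)) p :=
    ((Real.hasDerivAt_log hp).neg).sub_const 1
  have c2 : HasDerivAt (fun q : ℝ => Real.log (1-q) + 1) (-((1-p)⁻¹)) p := by
    have h := ((Real.hasDerivAt_log hq).comp p ((hasDerivAt_id p).const_sub 1)).add_const 1
    refine h.congr_deriv ?_
    ring
  exact ((c1.const_mul _).add (c2.const_mul _)).sub (hasDerivAt_psi1 k p)

lemma continuous_GF (k : ℕ) : Continuous (fun q => GF k q) := by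
  unfold GF psiF Mn
  have h1 : Continuous (fun q : ℝ => (k:ℝ) * Real.negMulLog q) :=
    continuous_const.mul Real.continuous_negMulLog
  have h2 : Continuous (fun q : ℝ => (k:ℝ) * Real.negMulLog (1-q)) :=
    continuous_const.mul (Real.continuous_negMulLog.comp (continuous_const.sub continuous_id))
  have h3 : Continuous (fun q : ℝ => ∑ x ∈ range (k+1), cc k x * (q ^ x * (1-q) ^ (k-x))) := by
    apply continuous_finset_sum
    intro i _
    exact continuous_const.mul ((continuous_pow i).mul ((continuous_const.sub continuous_id).pow _))
  exact (h1.add h2).sub h3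

lemma GF_concave (k : ℕ) : ConcaveOn ℝ (Set.Icc (0:ℝ) 1) (fun q => GF k q) := by
  apply concaveOn_of_hasDerivWithinAt2_nonpos (f' := fun q => G1 k q) (f'' := fun q => G2F k q)
    (convex_Icc 0 1) (continuous_GF k).continuousOn
  · intro x hx
    rw [interior_Icc] at hx
    exact (hasDerivAt_GF k (ne_of_gt hx.1) (by linarith [hx.2] : (1:ℝ) - x ≠ 0)).hasDerivWithinAt
  · intro x hx
    rw [interior_Icc] at hx
    exact (hasDerivAt_G1 k (ne_of_gt hx.1) (by linarith [hx.2] : (1:ℝ) - x ≠ 0)).hasDerivWithinAt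
  · intro x hx
    rw [interior_Icc] at hx
    have h := psi2_ge k hx.1 hx.2
    unfold G2F psi2F
    linarith [h]

noncomputable def Ent (k : ℕ) (p : ℝ) : ℝ :=
  ∑ x ∈ Finset.range (k + 1), Real.negMulLog ((k.choose x : ℝ) * p ^ x * (1 - p) ^ (k - x))

lemma Ent_reflect (k : ℕ) (p : ℝ) : Ent k (1-p) = Ent k p := by
  unfold Ent
  have h := Finset.sum_range_reflect
    (fun j => Real.negMulLog ((k.choose j : ℝ) * p ^ j * (1 - p) ^ (k - j))) (k+1)
  rw [← h]
  apply Finset.sum_congr rfl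
  intro j hj
  simp only [Finset.mem_range] at hj
  have e1 : k + 1 - 1 - j = k - j := by omega
  have e2 : k - (k - j) = j := by omega
  rw [e1, e2]
  have e4 : k.choose (k - j) = k.choose j := Nat.choose_symm (by omega)
  rw [e4]
  have e5 : (1:ℝ) - (1 - p) = p := by ring
  rw [e5]
  ring_nf

lemma sum_mom1 (k : ℕ) (p : ℝ) :
    ∑ x ∈ range (k+1), (x:ℝ) * ((k.choose x : ℝ) * Mn x (k-x) p) = k * p := by
  obtain _ | n := k
  · simp
  · rw [Finset.sum_range_succ']
    have h0 : ((0:ℕ):ℝ) * (((n+1).choose 0 : ℝ) * Mn 0 (n+1-0) p) = 0 := by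
      rw [Nat.cast_zero]; ring
    rw [h0, add_zero]
    have hterm : ∀ y ∈ range (n+1),
        ((y+1 : ℕ):ℝ) * (((n+1).choose (y+1) : ℝ) * Mn (y+1) (n+1-(y+1)) p)
          = ((n:ℝ)+1) * p * ((n.choose y : ℝ) * Mn y (n-y) p) := by
      intro y hy
      have hn := natid1 n y
      have hc : (((y+1) * (n+1).choose (y+1) : ℕ) : ℝ) = (((n+1) * n.choose y : ℕ) : ℝ) := by
        exact_mod_cast congrArg (Nat.cast (R := ℝ)) hn
      push_cast at hc
      have e1 : n+1-(y+1) = n-y := by omega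
      rw [e1, Mn, Mn, pow_succ]
      push_cast
      linear_combination (p ^ y * p * (1 - p) ^ (n - y)) * hc
    rw [Finset.sum_congr rfl hterm, ← Finset.mul_sum, sum_binom n p]
    push_cast
    ring

lemma sum_mom2 (k : ℕ) (p : ℝ) :
    ∑ x ∈ range (k+1), (((k-x : ℕ)):ℝ) * ((k.choose x : ℝ) * Mn x (k-x) p) = k * (1-p) := by
  have hterm : ∀ x ∈ range (k+1),
      (((k-x : ℕ)):ℝ) * ((k.choose x : ℝ) * Mn x (k-x) p)
        = (k:ℝ) * ((k.choose x : ℝ) * Mn x (k-x) p) - (x:ℝ) * ((k.choose x : ℝ) * Mn x (k-x) p) := by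
    intro x hx
    simp only [Finset.mem_range] at hx
    have : (((k-x : ℕ)):ℝ) = (k:ℝ) - (x:ℝ) := by
      rw [Nat.cast_sub (by omega)]
    rw [this]; ring
  rw [Finset.sum_congr rfl hterm, Finset.sum_sub_distrib, ← Finset.mul_sum, sum_binom k p,
    sum_mom1 k p]
  ring

lemma Ent_eq_GF (k : ℕ) {p : ℝ} (hp : p ∈ Set.Icc (0:ℝ) 1) : Ent k p = GF k p := by
  rcases eq_or_lt_of_le hp.1 with h0 | h0
  · -- p = 0
    have hp0 : p = 0 := h0.symm
    subst hp0
    have hE : Ent k 0 = 0 := by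
      unfold Ent
      apply Finset.sum_eq_zero
      intro x hx
      rcases Nat.eq_zero_or_pos x with hx0 | hx0
      · subst hx0; simp
      · rw [zero_pow (by omega)]
        simp
    have hpsi : psiF k 0 = 0 := by
      unfold psiF
      apply Finset.sum_eq_zero
      intro x hx
      rcases Nat.eq_zero_or_pos x with hx0 | hx0
      · subst hx0; simp [cc, Mn]
      · rw [Mn, zero_pow (by omega)]
        ring
    rw [hE]
    unfold GF
    rw [hpsi]
    simp
  rcases eq_or_lt_of_le hp.2 with h1 | h1
  · -- p = 1
    have hp1 : p = 1 := h1
    subst hp1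
    have hE : Ent k 1 = 0 := by
      unfold Ent
      apply Finset.sum_eq_zero
      intro x hx
      simp only [Finset.mem_range] at hx
      rcases Nat.lt_or_ge x k with hxk | hxk
      · rw [show (1:ℝ) - 1 = 0 by ring, zero_pow (by omega)]
        simp
      · have hxe : x = k := by omega
        subst hxe
        simp [Nat.choose_self, Nat.sub_self]
    have hpsi : psiF k 1 = 0 := by
      unfold psiF
      apply Finset.sum_eq_zero
      intro x hx
      simp only [Finset.mem_range] at hx
      rcases Nat.lt_or_ge x k with hxk | hxk
      · rw [Mn, show (1:ℝ) - 1 = 0 by ring, zero_pow (by omega)]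
        ring
      · have hxe : x = k := by omega
        subst hxe
        simp [cc, Mn, Nat.choose_self, Nat.sub_self]
    rw [hE]
    unfold GF
    rw [hpsi]
    simp
  · -- 0 < p < 1
    have hq : (0:ℝ) < 1 - p := by linarith
    have hterm : ∀ x ∈ range (k+1),
        Real.negMulLog ((k.choose x : ℝ) * p ^ x * (1 - p) ^ (k - x))
          = -(Real.log ((k.choose x : ℝ)) * ((k.choose x : ℝ) * Mn x (k-x) p))
            - Real.log p * ((x:ℝ) * ((k.choose x : ℝ) * Mn x (k-x) p))
            - Real.log (1-p) * ((((k-x:ℕ)):ℝ) * ((k.choose x : ℝ) * Mn x (k-x) p)) := by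
      intro x hx
      simp only [Finset.mem_range] at hx
      have hC : (0:ℝ) < (k.choose x : ℝ) := by
        exact_mod_cast Nat.choose_pos (by omega : x ≤ k)
      have hpx : (0:ℝ) < p ^ x := pow_pos h0 x
      have hqx : (0:ℝ) < (1-p) ^ (k-x) := pow_pos hq _
      rw [Real.negMulLog, Real.log_mul (by positivity) (ne_of_gt hqx),
        Real.log_mul (ne_of_gt hC) (ne_of_gt hpx), Real.log_pow, Real.log_pow, Mn]
      ring
    unfold Ent
    rw [Finset.sum_congr rfl hterm]
    have hsplit : ∑ x ∈ range (k+1),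
        (-(Real.log ((k.choose x : ℝ)) * ((k.choose x : ℝ) * Mn x (k-x) p))
          - Real.log p * ((x:ℝ) * ((k.choose x : ℝ) * Mn x (k-x) p))
          - Real.log (1-p) * ((((k-x:ℕ)):ℝ) * ((k.choose x : ℝ) * Mn x (k-x) p)))
        = -(∑ x ∈ range (k+1), Real.log ((k.choose x : ℝ)) * ((k.choose x : ℝ) * Mn x (k-x) p))
          - Real.log p * (∑ x ∈ range (k+1), (x:ℝ) * ((k.choose x : ℝ) * Mn x (k-x) p))
          - Real.log (1-p) * (∑ x ∈ range (k+1), (((k-x:ℕ)):ℝ) * ((k.choose x : ℝ) * Mn x (k-x) p)) := by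
      rw [Finset.sum_sub_distrib, Finset.sum_sub_distrib, ← Finset.sum_neg_distrib,
        ← Finset.mul_sum, ← Finset.mul_sum]
    rw [hsplit, sum_mom1, sum_mom2]
    unfold GF psiF
    have hpsi : ∑ x ∈ range (k+1), Real.log ((k.choose x : ℝ)) * ((k.choose x : ℝ) * Mn x (k-x) p)
        = ∑ x ∈ range (k+1), cc k x * Mn x (k-x) p := by
      exact Finset.sum_congr rfl fun x _ => by rw [cc]; ring
    rw [hpsi]
    rw [Real.negMulLog, Real.negMulLog]
    ring

lemma Ent_le_half (k : ℕ) {p : ℝ} (hp0 : 0 ≤ p) (hp1 : p ≤ 1) : Ent k p ≤ Ent k (1/2) := by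
  have hmem : p ∈ Set.Icc (0:ℝ) 1 := ⟨hp0, hp1⟩
  have hmem' : (1-p) ∈ Set.Icc (0:ℝ) 1 := ⟨by linarith, by linarith⟩
  have hconc := (GF_concave k).2 hmem hmem' (by norm_num : (0:ℝ) ≤ 1/2)
    (by norm_num : (0:ℝ) ≤ 1/2) (by norm_num)
  have hmid : (1/2 : ℝ) • p + (1/2 : ℝ) • (1-p) = 1/2 := by
    simp only [smul_eq_mul]; ring
  rw [hmid] at hconc
  simp only [smul_eq_mul] at hconc
  have e1 : Ent k p = GF k p := Ent_eq_GF k hmem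
  have e2 : Ent k (1-p) = GF k (1-p) := Ent_eq_GF k hmem'
  have e3 : Ent k (1/2) = GF k (1/2) := Ent_eq_GF k (by norm_num)
  have e4 : Ent k (1-p) = Ent k p := Ent_reflect k p
  linarith [hconc, e1.ge, e2.le, e3.le, e4.le]

/-- Base-2 Shannon entropy of the Binomial(k, p) distribution. -/
noncomputable def binEntropy (k : ℕ) (p : ℝ) : ℝ :=
  -∑ x ∈ Finset.range (k + 1),
      ((k.choose x : ℝ) * p ^ x * (1 - p) ^ (k - x)) *
        Real.logb 2 ((k.choose x : ℝ) * p ^ x * (1 - p) ^ (k - x))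

lemma binEntropy_eq (k : ℕ) (p : ℝ) : _root_.binEntropy k p = Ent k p / Real.log 2 := by
  unfold _root_.binEntropy Ent
  rw [← Finset.sum_neg_distrib, Finset.sum_div]
  apply Finset.sum_congr rfl
  intro x _
  rw [Real.negMulLog, Real.logb]
  ring

theorem binEntropy_le_binEntropy_half (k : ℕ) (p : ℝ) (hp0 : 0 ≤ p) (hp1 : p ≤ 1) :
    binEntropy k p ≤ binEntropy k (1 / 2) := by
  rw [binEntropy_eq, binEntropy_eq]
  have h := Ent_le_half k hp0 hp1
  have hlog : (0:ℝ) < Real.log 2 := Real.log_pos (by norm_num)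
  gcongr
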